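/- For the affine Weyl group of sl_2, with σ_{2i} = t_{-iα^∨}, the Grassmannian Schubert localization values are ψ^m_{2i+2a} = (1-x)^m S_{≤a}^m(x) for m = 2i or 2i-1 and a ≥ 0, where x = e^α and S_{≤a}^i(x) = Σ_{j=0}^a x^j binom(j+i-1, i-1). -/

import Mathlib

/-!
STATEMENT 13: For the affine Weyl group of `sl₂`, with `σ_{2i} = t_{-iα^∨}`,
the Grassmannian Schubert localization values are
`ψ^m_{2i+2a} = (1-x)^m S_{≤a}^m(x)` for `m = 2i` or `m = 2i-1` and `a ≥ 0`,
where `x = e^α` and `S_{≤a}^i(x) = Σ_{j=0}^a x^j C(j+i-1, i-1)`.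

Setup.  `W` is the affine Weyl group of `sl₂`: the Coxeter group on two
generators `r_0, r_1` with `m_{01} = ∞` (entry `0` of the Coxeter matrix).
The elements `σ_j` (with `σ_{2i} = (r_1r_0)^i`, `σ_{2i+1} = r_0 σ_{2i}`,
`σ_{-2i} = (r_0r_1)^i`, `σ_{-(2i+1)} = r_1 σ_{-2i}`) are given by the
alternating words `sigmaWord j` of length `|j|` ending in `r_0` for `j > 0`
and in `r_1` for `j < 0`.  The small-torus (level-zero, `e^δ = 1`)
localization: `W` acts on `F = Q(T)` with both simple reflections sending
`x = e^α` to `x⁻¹`, and `e^{α_1} = x`, `e^{α_0} = x⁻¹`.  The K-NilHecke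
framework (operators `T_i`, `T_w`, evaluation pairing `Pair`, Schubert
functions `ψ^v` with `⟨T_u, ψ^v⟩ = δ_{vu}`) is as before, and
`ψ^m_j := ψ^{σ_m}(σ_j)`.
-/
open scoped Classical

noncomputable section

/-- Left multiplication by `q : F` as an additive endomorphism of `F`. -/
def mulOp {F : Type*} [Field F] (q : F) : Module.End ℤ F :=
  (AddMonoidHom.mulLeft q).toIntLinearMap

/-- The action of a group element `w : W` on `F` as an additive endomorphism. -/
def grpOp {W F : Type*} [Field F] [Group W] [MulSemiringAction W F] (w : W) :
    Module.End ℤ F :=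
  (DistribMulAction.toAddMonoidHom F w).toIntLinearMap

/-- The Demazure element `T = (1 - a)⁻¹ (w - 1)` (with `a = e^{α_i}`,
`w = r_i`) as an operator on `F`. -/
def TOp {W F : Type*} [Field F] [Group W] [MulSemiringAction W F]
    (a : F) (w : W) : Module.End ℤ F :=
  mulOp (1 - a)⁻¹ * (grpOp w - 1)

/-- `T_ω = T_{i_1} ⋯ T_{i_N}` for a word `ω = (i_1, …, i_N)`. -/
def Tword {B W F : Type*} [Field F] [Group W] [MulSemiringAction W F]
    {M : CoxeterMatrix B} (cs : CoxeterSystem M W) (a : B → F) (ω : List B) :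
    Module.End ℤ F :=
  (ω.map (fun i => TOp (a i) (cs.simple i))).prod

/-- The alternating reduced word of `σ_j`: length `|j|`, ending in `0` if
`j ≥ 0` and in `1` if `j < 0`. -/
def sigmaWord (j : ℤ) : List (Fin 2) :=
  List.ofFn (fun k : Fin j.natAbs =>
    if (j.natAbs - 1 - (k : ℕ)) % 2 = 0 then (if 0 ≤ j then 0 else 1)
    else (if 0 ≤ j then 1 else 0))

/-- `S_{≤a}^m(x) = Σ_{j=0}^a x^j C(j+m-1, m-1)`, i.e. the sum
`h_0 + ⋯ + h_a` of complete homogeneous symmetric functions evaluated at `m`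
copies of `x` (so `S_{≤a}^0 = 1`). -/
def Sle {F : Type*} [Field F] (x : F) (m a : ℕ) : F :=
  if m = 0 then 1
  else ∑ j ∈ Finset.range (a + 1), x ^ j * ((j + m - 1).choose (m - 1) : F)

section Ops1
variable {W F : Type*} [Field F] [Group W] [MulSemiringAction W F]

@[simp] lemma mulOp_apply (q f : F) : mulOp q f = q * f := rfl
@[simp] lemma grpOp_apply (w : W) (f : F) : grpOp (F := F) w f = w • f := rfl

lemma mulOp_add (p q : F) : mulOp (p + q) = mulOp p + mulOp q := by
  ext f; simp [add_mul]

lemma mulOp_mul (p q : F) : mulOp (p * q) = mulOp p * mulOp q := by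
  ext f; simp [mul_assoc]

@[simp] lemma mulOp_one : mulOp (1 : F) = 1 := by ext f; simp

@[simp] lemma mulOp_zero : mulOp (0 : F) = 0 := by ext f; simp

lemma grpOp_mul (u v : W) : grpOp (F := F) (u * v) = grpOp u * grpOp v := by
  ext f; simp [mul_smul]

@[simp] lemma grpOp_one : grpOp (F := F) (1 : W) = 1 := by ext f; simp

lemma grpOp_mulOp (w : W) (q : F) :
    grpOp (F := F) w * mulOp q = mulOp (w • q) * grpOp w := by
  ext f; simp [smul_mul']
end Ops1

section Ops
variable {W F : Type*} [Field F] [Group W] [MulSemiringAction W F]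

lemma smul_inv_field (s : W) (y : F) : s • (y⁻¹) = (s • y)⁻¹ := by
  rcases eq_or_ne y 0 with rfl | hy
  · simp
  · refine eq_inv_of_mul_eq_one_left ?_
    rw [← smul_mul', inv_mul_cancel₀ hy, smul_one]

lemma TOp_apply (b : F) (s : W) (f : F) : TOp b s f = (1 - b)⁻¹ * (s • f - f) := by
  simp [TOp, Module.End.mul_apply, LinearMap.sub_apply]

lemma TOp_sq (b : F) (s : W) (hb0 : b ≠ 0) (hb1 : b ≠ 1)
    (hsb : s • b = b⁻¹) (hs2 : s * s = 1) :
    TOp b s * TOp b s = - TOp b s := by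
  have hb1' : (1 : F) - b ≠ 0 := sub_ne_zero.2 (Ne.symm hb1)
  have key : (1 - b⁻¹)⁻¹ = 1 - (1 - b)⁻¹ := by
    refine (eq_inv_of_mul_eq_one_left ?_).symm
    field_simp
    ring
  ext f
  have hss : s • s • f = f := by rw [← mul_smul, hs2, one_smul]
  have hsc : s • ((1 - b)⁻¹ : F) = (1 - b⁻¹)⁻¹ := by
    rw [smul_inv_field, smul_sub, smul_one, hsb]
  simp only [Module.End.mul_apply, LinearMap.neg_apply, TOp_apply]
  rw [smul_mul', hsc, smul_sub, hss, key]
  ring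
end Ops

/-- The letter prepended to `σ_n` to get `σ_{n+1}`. -/
def letterP (n : ℕ) : Fin 2 := if n % 2 = 0 then 0 else 1
def letterN (n : ℕ) : Fin 2 := if n % 2 = 0 then 1 else 0

@[simp] lemma sigmaWord_zero : sigmaWord 0 = [] := rfl

lemma sigmaWord_length (j : ℤ) : (sigmaWord j).length = j.natAbs := by
  simp [sigmaWord]

lemma sigmaWord_pos_succ (n : ℕ) :
    sigmaWord ((n : ℤ) + 1) = letterP n :: sigmaWord (n : ℤ) := by
  have h1 : ((n : ℤ) + 1).natAbs = n + 1 := by omega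
  have h0 : ((n : ℤ)).natAbs = n := by omega
  have hle1 : (0 : ℤ) ≤ (n : ℤ) + 1 := by omega
  have hle0 : (0 : ℤ) ≤ (n : ℤ) := by omega
  unfold sigmaWord
  simp only [h1, h0, if_pos hle1, if_pos hle0]
  rw [List.ofFn_succ]
  congr 1
  refine congrArg List.ofFn (funext fun k => ?_)
  simp only [Fin.coe_cast, Fin.val_succ]
  have h : n + 1 - 1 - ((k : ℕ) + 1) = n - 1 - (k : ℕ) := by omega
  simp only [h]
lemma sigmaWord_neg_succ (n : ℕ) :
    sigmaWord (-(n : ℤ) - 1) = letterN n :: sigmaWord (-(n : ℤ)) := by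
  have h1 : (-(n : ℤ) - 1).natAbs = n + 1 := by omega
  have hneg : ¬ (0 : ℤ) ≤ -(n : ℤ) - 1 := by omega
  rcases Nat.eq_zero_or_pos n with rfl | hn
  · unfold sigmaWord
    simp only [h1, if_neg hneg]
    simp [letterN]
  · have h0 : (-(n : ℤ)).natAbs = n := by omega
    have hneg0 : ¬ (0 : ℤ) ≤ -(n : ℤ) := by omega
    unfold sigmaWord
    simp only [h1, h0, if_neg hneg, if_neg hneg0]
    rw [List.ofFn_succ]
    congr 1
    refine congrArg List.ofFn (funext fun k => ?_)
    simp only [Fin.coe_cast, Fin.val_succ]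
    have h : n + 1 - 1 - ((k : ℕ) + 1) = n - 1 - (k : ℕ) := by omega
    simp only [h]

section Dihedral
variable {W : Type*} [Group W] {M : CoxeterMatrix (Fin 2)} (cs : CoxeterSystem M W)

/-- Two involutions of `ℤ` generating an infinite dihedral group. -/
def dperm (i : Fin 2) : Equiv.Perm ℤ :=
  Function.Involutive.toPerm (fun t => (if i = 0 then -1 else 1) - t)
    (fun t => by dsimp; ring)

@[simp] lemma dperm_apply (i : Fin 2) (t : ℤ) :
    dperm i t = (if i = 0 then -1 else 1) - t := rfl

lemma dperm_sq (i : Fin 2) : dperm i * dperm i = 1 := by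
  ext t
  simp [Equiv.Perm.mul_apply]

lemma dperm_liftable (hM01 : M 0 1 = 0) : M.IsLiftable dperm := by
  intro i i'
  fin_cases i <;> fin_cases i' <;> beta_reduce <;>
    simp only [Fin.zero_eta, Fin.mk_one]
  · rw [M.diagonal, pow_one, dperm_sq]
  · rw [hM01, pow_zero]
  · rw [M.symmetric 1 0, hM01, pow_zero]
  · rw [M.diagonal, pow_one, dperm_sq]

def dlift (hM01 : M 0 1 = 0) : W →* Equiv.Perm ℤ :=
  cs.lift ⟨dperm, dperm_liftable (M := M) hM01⟩

lemma dlift_simple (hM01 : M 0 1 = 0) (i : Fin 2) :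
    dlift cs hM01 (cs.simple i) = dperm i :=
  cs.lift_apply_simple _ i

lemma dlift_bound (hM01 : M 0 1 = 0) (ω : List (Fin 2)) :
    |dlift cs hM01 (cs.wordProd ω) 0| ≤ (ω.length : ℤ) := by
  induction ω with
  | nil => simp
  | cons i ω ih =>
      rw [cs.wordProd_cons, map_mul, dlift_simple cs hM01]
      have : (dperm i * dlift cs hM01 (cs.wordProd ω)) 0
          = (if i = 0 then -1 else 1) - dlift cs hM01 (cs.wordProd ω) 0 := rfl
      rw [this]
      simp only [List.length_cons]
      push_cast
      set v := dlift cs hM01 (cs.wordProd ω) 0 with hv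
      have habs : |(if i = 0 then (-1:ℤ) else 1) - v| ≤ 1 + |v| := by
        refine le_trans (abs_sub _ _) ?_
        gcongr
        split_ifs <;> simp
      omega

lemma dlift_sigma_pos (hM01 : M 0 1 = 0) (n : ℕ) :
    dlift cs hM01 (cs.wordProd (sigmaWord n)) 0
      = if n % 2 = 0 then (n : ℤ) else -(n : ℤ) := by
  induction n with
  | zero => simp [sigmaWord_zero]
  | succ n ih =>
      have : ((n : ℤ) + 1) = ((n + 1 : ℕ) : ℤ) := by push_cast; ring
      rw [← this, sigmaWord_pos_succ, cs.wordProd_cons, map_mul, dlift_simple cs hM01]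
      have happ : (dperm (letterP n) * dlift cs hM01 (cs.wordProd (sigmaWord n))) 0
          = (if letterP n = 0 then -1 else 1)
            - dlift cs hM01 (cs.wordProd (sigmaWord n)) 0 := rfl
      rw [happ, ih]
      rcases Nat.even_or_odd n with he | he
      · have h2 : n % 2 = 0 := Nat.even_iff.mp he
        simp [letterP, h2, Nat.succ_mod_two_eq_one_iff.mpr h2]
        omega
      · have h2 : n % 2 = 1 := Nat.odd_iff.mp he
        have h2' : (n + 1) % 2 = 0 := by omega
        simp [letterP, h2, h2']
        omega

lemma dlift_sigma_neg (hM01 : M 0 1 = 0) (n : ℕ) :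
    dlift cs hM01 (cs.wordProd (sigmaWord (-(n : ℤ)))) 0
      = if n % 2 = 0 then -(n : ℤ) else (n : ℤ) := by
  induction n with
  | zero => simp [sigmaWord_zero]
  | succ n ih =>
      have : (-((n : ℤ) + 1)) = -(n : ℤ) - 1 := by ring
      rw [show ((-((n+1 : ℕ) : ℤ))) = -(n : ℤ) - 1 by push_cast; ring,
        sigmaWord_neg_succ, cs.wordProd_cons, map_mul, dlift_simple cs hM01]
      have happ : (dperm (letterN n) * dlift cs hM01 (cs.wordProd (sigmaWord (-(n:ℤ))))) 0
          = (if letterN n = 0 then -1 else 1)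
            - dlift cs hM01 (cs.wordProd (sigmaWord (-(n:ℤ)))) 0 := rfl
      rw [happ, ih]
      rcases Nat.even_or_odd n with he | he
      · have h2 : n % 2 = 0 := Nat.even_iff.mp he
        simp [letterN, h2, Nat.succ_mod_two_eq_one_iff.mpr h2]
        omega
      · have h2 : n % 2 = 1 := Nat.odd_iff.mp he
        have h2' : (n + 1) % 2 = 0 := by omega
        simp [letterN, h2, h2']
        omega

lemma dlift_sigma (hM01 : M 0 1 = 0) (p : ℤ) :
    dlift cs hM01 (cs.wordProd (sigmaWord p)) 0 = if p % 2 = 0 then p else -p := by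
  rcases Int.eq_nat_or_neg p with ⟨n, rfl | rfl⟩
  · rw [dlift_sigma_pos cs hM01]
    by_cases h2 : n % 2 = 0
    · rw [if_pos h2, if_pos (by omega : ((n:ℤ)) % 2 = 0)]
    · rw [if_neg h2, if_neg (by omega : ¬ ((n:ℤ)) % 2 = 0)]
  · rw [dlift_sigma_neg cs hM01]
    by_cases h2 : n % 2 = 0
    · rw [if_pos h2, if_pos (by omega : ((-(n:ℤ))) % 2 = 0)]
    · rw [if_neg h2, if_neg (by omega : ¬ ((-(n:ℤ))) % 2 = 0)]
      ring

lemma sigma_injective (hM01 : M 0 1 = 0) {p q : ℤ}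
    (h : cs.wordProd (sigmaWord p) = cs.wordProd (sigmaWord q)) : p = q := by
  have h1 := dlift_sigma cs hM01 p
  have h2 := dlift_sigma cs hM01 q
  rw [h, h2] at h1
  rcases Int.emod_two_eq p with hp | hp <;> rcases Int.emod_two_eq q with hq | hq <;>
    simp [hp, hq] at h1 <;> omega

lemma sigma_reduced (hM01 : M 0 1 = 0) (p : ℤ) : cs.IsReduced (sigmaWord p) := by
  unfold CoxeterSystem.IsReduced
  refine le_antisymm (cs.length_wordProd_le _) ?_
  obtain ⟨ω, hlen, hw⟩ := cs.exists_reduced_word (cs.wordProd (sigmaWord p))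
  have hb := dlift_bound cs hM01 ω
  rw [← hw, dlift_sigma cs hM01 p] at hb
  have hb' : |p| ≤ (ω.length : ℤ) := by
    rcases Int.emod_two_eq p with hp | hp
    · rwa [if_pos hp] at hb
    · rw [if_neg (by omega)] at hb
      rwa [abs_neg] at hb
  rw [sigmaWord_length, hw, hlen.eq]
  rw [Int.abs_eq_natAbs] at hb'
  exact_mod_cast hb'

end Dihedral

section Scalar
variable {F : Type*} [Field F]

lemma Sle_zero (x : F) (a : ℕ) : Sle x 0 a = 1 := by simp [Sle]

lemma Sle_a_zero (x : F) (m : ℕ) : Sle x m 0 = 1 := by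
  rcases Nat.eq_zero_or_pos m with rfl | hm
  · simp [Sle]
  · rw [Sle, if_neg (by omega)]
    simp

lemma Sle_succ_eq (x : F) (r a : ℕ) :
    Sle x (r + 1) a = ∑ j ∈ Finset.range (a + 1), x ^ j * ((j + r).choose r : F) := by
  rw [Sle, if_neg (by omega)]
  refine Finset.sum_congr rfl fun j _ => ?_
  have h : (j + (r + 1) - 1).choose (r + 1 - 1) = (j + r).choose r := by
    congr 1 <;> omega
  rw [h]

/-- Identity A: `S^{r+1}_{≤ a+1} = z S^{r+1}_{≤ a} + S^r_{≤ a+1}`. -/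
lemma Sle_identityA (z : F) (r a : ℕ) :
    Sle z (r + 1) (a + 1) = z * Sle z (r + 1) a + Sle z r (a + 1) := by
  rcases Nat.eq_zero_or_pos r with rfl | hr
  · -- geometric series case
    rw [Sle_zero]
    rw [Sle_succ_eq, Sle_succ_eq]
    simp only [Nat.choose_zero_right, Nat.cast_one, mul_one]
    rw [Finset.mul_sum]
    rw [Finset.sum_range_succ' (fun j => z ^ j) (a + 1)]
    simp [pow_succ, mul_comm]
  · obtain ⟨t, rfl⟩ : ∃ t, r = t + 1 := ⟨r - 1, by omega⟩
    rw [Sle_succ_eq, Sle_succ_eq, Sle_succ_eq]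
    -- Pascal on each term with j ≥ 1
    rw [Finset.sum_range_succ' (fun j => z ^ j * (((j + (t + 1)).choose (t + 1) : ℕ) : F)) (a+1)]
    rw [Finset.sum_range_succ' (fun j => z ^ j * (((j + t).choose t : ℕ) : F)) (a+1)]
    have pascal : ∀ j : ℕ, ((j + 1 + (t + 1)).choose (t + 1) : F)
        = ((j + (t + 1)).choose (t + 1) : F) + ((j + t + 1).choose t : F) := by
      intro j
      have h : (j + 1 + (t + 1)).choose (t + 1) = (j + (t + 1)).choose (t + 1) + (j + t + 1).choose t := by
        have h1 : j + 1 + (t + 1) = (j + t + 1) + 1 := by omega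
        rw [h1, Nat.choose_succ_succ']
        have h3 : j + (t + 1) = j + t + 1 := by omega
        rw [h3]
        exact Nat.add_comm _ _
      rw [h]
      push_cast
      ring
    have exp : ∀ j : ℕ, z ^ (j + 1) * (((j + 1 + (t + 1)).choose (t + 1) : ℕ) : F)
        = z * (z ^ j * ((j + (t + 1)).choose (t + 1) : F))
          + z ^ (j + 1) * ((j + t + 1).choose t : F) := by
      intro j
      rw [pascal j]
      ring
    rw [Finset.sum_congr rfl (fun j _ => exp j), Finset.sum_add_distrib]
    rw [Finset.mul_sum]
    simp only [Nat.zero_add, Nat.choose_self, Nat.cast_one, mul_one, pow_zero, one_mul]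
    have hfix : ∑ x ∈ Finset.range (a + 1), z ^ (x + 1) * (((x + 1 + t).choose t : ℕ) : F)
        = ∑ x ∈ Finset.range (a + 1), z ^ (x + 1) * (((x + t + 1).choose t : ℕ) : F) := by
      refine Finset.sum_congr rfl fun x _ => ?_
      have hx : x + 1 + t = x + t + 1 := by omega
      rw [hx]
    rw [hfix]
    ring

def cfP (q : F) (n k : ℕ) : F := if k ≤ n then (1 - q) ^ k * Sle q k ((n - k) / 2) else 0
def cfN (q : F) (n m : ℕ) : F := if m < n then (1 - q) ^ m * Sle q m ((n - m - 1) / 2) else 0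

@[simp] lemma cfP_zero (q : F) (n : ℕ) : cfP q n 0 = 1 := by
  simp [cfP, Sle_zero]

/-- Scalar recurrence, positive side. -/
lemma cfP_rec (z : F) (n k : ℕ) :
    cfP z (n + 1) k
      = (if k % 2 = n % 2 ∨ k = 0 then 1 else z) * cfP z n k
        + (if k % 2 ≠ n % 2 ∧ 1 ≤ k then (1 - z) * cfP z n (k - 1) else 0) := by
  rcases Nat.eq_zero_or_pos k with rfl | hk
  · simp [cfP, Sle_zero]
  by_cases hpar : k % 2 = n % 2
  · -- diagonal case
    rw [if_pos (Or.inl hpar), if_neg (by omega), one_mul, add_zero]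
    by_cases hkn : k ≤ n
    · unfold cfP
      rw [if_pos (by omega), if_pos hkn]
      have : (n + 1 - k) / 2 = (n - k) / 2 := by omega
      rw [this]
    · unfold cfP
      rw [if_neg (by omega), if_neg (by omega)]
  · -- shift case
    rw [if_neg (by omega), if_pos ⟨hpar, hk⟩]
    by_cases hkn : k ≤ n + 1
    · have hk1n : k - 1 ≤ n := by omega
      obtain ⟨r, rfl⟩ : ∃ r, k = r + 1 := ⟨k - 1, by omega⟩
      by_cases hkn' : r + 1 ≤ n
      · -- interior: use identity A
        unfold cfP
        rw [if_pos hkn, if_pos hkn', if_pos (by omega)]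
        have ha : (n + 1 - (r + 1)) / 2 = (n - (r + 1)) / 2 + 1 := by omega
        have ha2 : (n - (r + 1 - 1)) / 2 = (n - (r + 1)) / 2 + 1 := by omega
        rw [ha, Sle_identityA z r ((n - (r + 1)) / 2)]
        have h3 : r + 1 - 1 = r := by omega
        rw [h3] at ha2 ⊢
        rw [ha2]
        ring
      · -- boundary k = n + 1
        unfold cfP
        rw [if_pos hkn, if_neg (by omega), if_pos (by omega)]
        have h6 : r + 1 - 1 = r := by omega
        rw [h6]
        have h4 : (n + 1 - (r + 1)) / 2 = 0 := by omega
        have h5 : (n - r) / 2 = 0 := by omega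
        rw [h4, h5, Sle_a_zero, Sle_a_zero]
        ring
    · unfold cfP
      rw [if_neg (by omega), if_neg (by omega), if_neg (by omega)]
      ring

/-- Scalar recurrence, negative side. -/
lemma cfN_rec (z : F) (n j : ℕ) :
    cfN z (n + 1) (j + 1)
      = (if (j + 1) % 2 ≠ n % 2 then 1 else z) * cfN z n (j + 1)
        + (if (j + 1) % 2 = n % 2 then
            (1 - z) * (if j = 0 then 1 else cfN z n j) else 0) := by
  by_cases hpar : (j + 1) % 2 = n % 2
  · rw [if_neg (by omega), if_pos hpar]
    rcases Nat.eq_zero_or_pos j with rfl | hj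
    · -- j = 0 : n odd
      rw [if_pos rfl]
      have hn : n % 2 = 1 := by omega
      by_cases h1 : 1 < n + 1
      · unfold cfN
        rw [if_pos h1]
        by_cases h2 : 1 < n
        · rw [if_pos h2]
          have ha : (n + 1 - 1 - 1) / 2 = (n - 1 - 1) / 2 + 1 := by omega
          rw [ha, Sle_identityA z 0 ((n - 1 - 1)/2), Sle_zero]
          ring
        · -- n = 1
          have : n = 1 := by omega
          subst this
          rw [if_neg (by omega)]
          norm_num [Sle_a_zero]
      · omega
    · obtain ⟨i, rfl⟩ : ∃ i, j = i + 1 := ⟨j - 1, by omega⟩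
      rw [if_neg (by omega)]
      unfold cfN
      by_cases h1 : i + 1 + 1 < n
      · rw [if_pos (by omega), if_pos h1, if_pos (by omega)]
        have ha : (n + 1 - (i + 1 + 1) - 1) / 2 = (n - (i + 1 + 1) - 1) / 2 + 1 := by omega
        have ha2 : (n - (i + 1) - 1) / 2 = (n - (i + 1 + 1) - 1) / 2 + 1 := by omega
        rw [ha, ha2, Sle_identityA z (i + 1) ((n - (i + 1 + 1) - 1)/2)]
        ring
      · by_cases h2 : i + 1 + 1 = n
        · rw [if_pos (by omega), if_neg (by omega), if_pos (by omega)]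
          have h4 : (n + 1 - (i + 1 + 1) - 1) / 2 = 0 := by omega
          have h5 : (n - (i + 1) - 1) / 2 = 0 := by omega
          rw [h4, h5, Sle_a_zero, Sle_a_zero]
          ring
        · rw [if_neg (by omega), if_neg (by omega), if_neg (by omega)]
          ring
  · -- diagonal
    rw [if_pos hpar, if_neg (by omega), one_mul, add_zero]
    unfold cfN
    by_cases h1 : j + 1 < n
    · rw [if_pos (by omega), if_pos h1]
      have : (n + 1 - (j + 1) - 1) / 2 = (n - (j + 1) - 1) / 2 := by omega
      rw [this]
    · by_cases h2 : j + 1 = n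
      · omega
      · rw [if_neg (by omega), if_neg (by omega)]

end Scalar

section Smul
variable {W F : Type*} [Field F] [Group W] [MulSemiringAction W F]

lemma smul_Sle (g : W) (q : F) (m a : ℕ) : g • Sle q m a = Sle (g • q) m a := by
  have : g • Sle q m a = (MulSemiringAction.toRingHom W F g) (Sle q m a) := rfl
  rw [this]
  unfold Sle
  rw [apply_ite (MulSemiringAction.toRingHom W F g), map_one, map_sum]
  congr 1
  refine Finset.sum_congr rfl fun j _ => ?_
  rw [map_mul, map_pow, map_natCast]
  rfl

lemma smul_cfP (g : W) (q : F) (n k : ℕ) : g • cfP q n k = cfP (g • q) n k := by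
  unfold cfP
  rw [smul_ite, smul_zero, smul_mul', smul_pow', smul_sub, smul_one, smul_Sle]

lemma smul_cfN (g : W) (q : F) (n m : ℕ) : g • cfN q n m = cfN (g • q) n m := by
  unfold cfN
  rw [smul_ite, smul_zero, smul_mul', smul_pow', smul_sub, smul_one, smul_Sle]
end Smul


section Main
variable {W F : Type*} [Field F] [Group W] [MulSemiringAction W F]
  {M : CoxeterMatrix (Fin 2)} (cs : CoxeterSystem M W)

lemma Tword_nil (a : Fin 2 → F) : Tword cs a [] = 1 := by simp [Tword]

lemma Tword_cons (a : Fin 2 → F) (i : Fin 2) (ω : List (Fin 2)) :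
    Tword cs a (i :: ω) = TOp (a i) (cs.simple i) * Tword cs a ω := by
  simp [Tword]

lemma letterP_congr {k n : ℕ} (h : k % 2 = n % 2) : letterP k = letterP n := by
  unfold letterP
  rw [h]

lemma letterN_eq_letterP_succ (j : ℕ) : letterN j = letterP (j + 1) := by
  unfold letterN letterP
  rcases Nat.eq_zero_or_pos (j % 2) with h | h
  · rw [if_pos h, if_neg (by omega)]
  · rw [if_neg (by omega), if_pos (by omega)]

variable (x : F) (a : Fin 2 → F)

/-- `y n`: the variable of the coefficients at stage `n`. -/
def yv (n : ℕ) : F := if n % 2 = 0 then x else x⁻¹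

section WithHyps
variable (hx0 : x ≠ 0) (hx1 : x ≠ 1)
  (hact : ∀ i : Fin 2, cs.simple i • x = x⁻¹)
  (ha0 : a 0 = x⁻¹) (ha1 : a 1 = x)

include hx1 ha0 ha1 in
lemma ha_ne1 : ∀ i : Fin 2, a i ≠ 1 := by
  intro i
  fin_cases i <;> beta_reduce <;> simp only [Fin.zero_eta, Fin.mk_one]
  · rw [ha0]; simpa using hx1
  · rw [ha1]; exact hx1

include hx0 ha0 ha1 in
lemma ha_ne0 : ∀ i : Fin 2, a i ≠ 0 := by
  intro i
  fin_cases i <;> beta_reduce <;> simp only [Fin.zero_eta, Fin.mk_one]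
  · rw [ha0]; simpa using hx0
  · rw [ha1]; exact hx0

include hact in
lemma hs_inv_x (i : Fin 2) : cs.simple i • (x⁻¹) = x := by
  rw [smul_inv_field, hact i, inv_inv]

include hact ha0 ha1 in
lemma hsa (i : Fin 2) : cs.simple i • a i = (a i)⁻¹ := by
  fin_cases i <;> beta_reduce <;> simp only [Fin.zero_eta, Fin.mk_one]
  · rw [ha0, hs_inv_x cs x hact, inv_inv]
  · rw [ha1, hact]

include hx0 hx1 hact ha0 ha1 in
lemma Tsq_i (i : Fin 2) :
    TOp (a i) (cs.simple i) * TOp (a i) (cs.simple i) = - TOp (a i) (cs.simple i) :=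
  TOp_sq (a i) (cs.simple i) (ha_ne0 x a hx0 ha0 ha1 i) (ha_ne1 x a hx1 ha0 ha1 i)
    (hsa cs x a hact ha0 ha1 i) (cs.simple_mul_simple_self i)

include hx1 ha0 ha1 in
lemma grpOp_simple_eq (i : Fin 2) :
    grpOp (F := F) (cs.simple i) = mulOp (1 - a i) * TOp (a i) (cs.simple i) + 1 := by
  have h1 : (1 : F) - a i ≠ 0 := sub_ne_zero.2 (Ne.symm (ha_ne1 x a hx1 ha0 ha1 i))
  unfold TOp
  rw [← mul_assoc, ← mulOp_mul, mul_inv_cancel₀ h1, mulOp_one, one_mul]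
  abel

include hact in
lemma hsy (i : Fin 2) (n : ℕ) : cs.simple i • yv x n = yv x (n + 1) := by
  unfold yv
  by_cases h : n % 2 = 0
  · rw [if_pos h, if_neg (by omega), hact]
  · rw [if_neg h, if_pos (by omega), hs_inv_x cs x hact]

include ha0 ha1 in
lemma hb_eq (n : ℕ) : a (letterP n) = yv x (n + 1) := by
  unfold letterP yv
  by_cases h : n % 2 = 0
  · rw [if_pos h, if_neg (by omega), ha0]
  · rw [if_neg h, if_pos (by omega), ha1]

include hx0 hx1 hact ha0 ha1 in
lemma TwP (n k : ℕ) :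
    TOp (a (letterP n)) (cs.simple (letterP n)) * Tword cs a (sigmaWord (k : ℤ))
      = if k % 2 = n % 2 then Tword cs a (sigmaWord ((k : ℤ) + 1))
        else if k = 0 then Tword cs a (sigmaWord (-1 : ℤ))
        else - Tword cs a (sigmaWord (k : ℤ)) := by
  by_cases hpar : k % 2 = n % 2
  · rw [if_pos hpar, ← letterP_congr hpar, sigmaWord_pos_succ, Tword_cons]
  · rw [if_neg hpar]
    rcases Nat.eq_zero_or_pos k with rfl | hk
    · rw [if_pos rfl]
      have hn : letterP n = letterN 0 := by
        unfold letterP letterN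
        rw [if_neg (by omega), if_pos (by omega)]
      have : sigmaWord (-1 : ℤ) = letterN 0 :: sigmaWord (-(0:ℕ) : ℤ) := by
        have := sigmaWord_neg_succ 0
        simpa using this
      rw [this, Tword_cons, hn]
      simp [sigmaWord_zero, Tword_nil]
    · rw [if_neg (by omega)]
      obtain ⟨r, rfl⟩ : ∃ r, k = r + 1 := ⟨k - 1, by omega⟩
      have hl : letterP r = letterP n := letterP_congr (by omega)
      have hword : sigmaWord ((r + 1 : ℕ) : ℤ) = letterP n :: sigmaWord (r : ℤ) := by
        rw [show ((r + 1 : ℕ) : ℤ) = (r : ℤ) + 1 by push_cast; ring, sigmaWord_pos_succ, hl]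
      rw [hword, Tword_cons, ← mul_assoc, Tsq_i cs x a hx0 hx1 hact ha0 ha1, neg_mul]

include hx0 hx1 hact ha0 ha1 in
lemma TwN (n j : ℕ) :
    TOp (a (letterP n)) (cs.simple (letterP n)) * Tword cs a (sigmaWord (-(j : ℤ) - 1))
      = if (j + 1) % 2 = n % 2 then - Tword cs a (sigmaWord (-(j : ℤ) - 1))
        else Tword cs a (sigmaWord (-(j : ℤ) - 2)) := by
  have hcons : sigmaWord (-(j : ℤ) - 1) = letterN j :: sigmaWord (-(j : ℤ)) :=
    sigmaWord_neg_succ j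
  by_cases hpar : (j + 1) % 2 = n % 2
  · rw [if_pos hpar]
    have hl : letterP n = letterN j := by
      rw [letterN_eq_letterP_succ]
      exact letterP_congr hpar.symm
    rw [hcons, Tword_cons, hl, ← mul_assoc, Tsq_i cs x a hx0 hx1 hact ha0 ha1, neg_mul]
  · rw [if_neg hpar]
    have hcons2 : sigmaWord (-(j : ℤ) - 2) = letterN (j + 1) :: sigmaWord (-(j : ℤ) - 1) := by
      have h := sigmaWord_neg_succ (j + 1)
      rw [show (-((j + 1 : ℕ) : ℤ) - 1) = -(j : ℤ) - 2 by push_cast; ring,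
        show (-((j + 1 : ℕ) : ℤ)) = -(j : ℤ) - 1 by push_cast; ring] at h
      exact h
    have hl : letterP n = letterN (j + 1) := by
      rw [letterN_eq_letterP_succ]
      exact letterP_congr (by omega)
    rw [hcons2, Tword_cons, hl]

end WithHyps
end Main

section Key
variable {W F : Type*} [Field F] [Group W] [MulSemiringAction W F]
  {M : CoxeterMatrix (Fin 2)} (cs : CoxeterSystem M W)

lemma mulOp_sub (p q : F) : mulOp (p - q) = mulOp p - mulOp q := by
  ext f; simp [sub_mul]

lemma mulOp_ite_mul (c : Prop) [Decidable c] (v : F) (T : Module.End ℤ F) :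
    mulOp (if c then v else 0) * T = if c then mulOp v * T else 0 := by
  split_ifs <;> simp

variable (x : F) (a : Fin 2 → F)
variable (hx0 : x ≠ 0) (hx1 : x ≠ 1)
  (hact : ∀ i : Fin 2, cs.simple i • x = x⁻¹)
  (ha0 : a 0 = x⁻¹) (ha1 : a 1 = x)

include hx0 hx1 hact ha0 ha1 in
lemma key : ∀ n : ℕ,
    grpOp (F := F) (cs.wordProd (sigmaWord (n : ℤ)))
      = (∑ k ∈ Finset.range (n + 1),
          mulOp (cfP (yv x n) n k) * Tword cs a (sigmaWord (k : ℤ)))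
        + ∑ j ∈ Finset.range (n + 1),
            mulOp (cfN (yv x n) n (j + 1)) * Tword cs a (sigmaWord (-(j : ℤ) - 1)) := by
  intro n
  induction n with
  | zero =>
      have h1 : cfN (yv x 0) 0 (0 + 1) = 0 := by simp [cfN]
      simp [Finset.sum_range_one, sigmaWord_zero, Tword_nil, h1, cfP_zero,
        mulOp_one, mulOp_zero]
  | succ n ih =>
      have hz := hsy cs x hact (letterP n) n
      set z := yv x (n + 1) with hzdef
      rw [show ((n + 1 : ℕ) : ℤ) = (n : ℤ) + 1 by push_cast; ring, sigmaWord_pos_succ,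
        cs.wordProd_cons, grpOp_mul, ih, mul_add, Finset.mul_sum, Finset.mul_sum]
      -- per-term rewriting, positive part
      have hterm_pos : ∀ k ∈ Finset.range (n + 1),
          grpOp (F := F) (cs.simple (letterP n))
              * (mulOp (cfP (yv x n) n k) * Tword cs a (sigmaWord (k : ℤ)))
            = (mulOp ((if k % 2 = n % 2 ∨ k = 0 then 1 else z) * cfP z n k)
                  * Tword cs a (sigmaWord (k : ℤ))
                + (if k % 2 = n % 2 then
                    mulOp ((1 - z) * cfP z n k) * Tword cs a (sigmaWord ((k : ℤ) + 1)) else 0))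
              + (if ¬ n % 2 = 0 ∧ k = 0 then
                  mulOp ((1 - z) * 1) * Tword cs a (sigmaWord (-1 : ℤ)) else 0) := by
        intro k _
        rw [← mul_assoc, grpOp_mulOp, smul_cfP, hz, mul_assoc,
          grpOp_simple_eq cs x a hx1 ha0 ha1 (letterP n), add_mul, one_mul,
          mul_assoc (mulOp (1 - a (letterP n))), TwP cs x a hx0 hx1 hact ha0 ha1 n k,
          hb_eq x a ha0 ha1 n, ← hzdef, mul_add]
        by_cases hpar : k % 2 = n % 2
        · rw [if_pos hpar, if_pos (Or.inl hpar), if_pos hpar,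
            if_neg (by omega : ¬ (¬ n % 2 = 0 ∧ k = 0)), add_zero, one_mul,
            ← mul_assoc, ← mulOp_mul, mul_comm (cfP z n k) (1 - z)]
          exact add_comm _ _
        · rw [if_neg hpar]
          rcases Nat.eq_zero_or_pos k with rfl | hk
          · rw [if_pos rfl, if_pos (Or.inr rfl), if_neg hpar,
              if_pos ⟨by omega, rfl⟩, one_mul, cfP_zero, mulOp_one, one_mul, mul_one,
              add_zero]
            exact add_comm _ _
          · rw [if_neg (by omega : ¬ k = 0), if_neg (by omega : ¬ (k % 2 = n % 2 ∨ k = 0)),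
              if_neg hpar, if_neg (by omega : ¬ (¬ n % 2 = 0 ∧ k = 0)), add_zero, add_zero,
              mul_neg, mul_neg, ← mul_assoc, ← mulOp_mul]
            have hzc : z * cfP z n k = cfP z n k - cfP z n k * (1 - z) := by ring
            rw [hzc, mulOp_sub, sub_mul]
            abel
      -- per-term rewriting, negative part
      have hterm_neg : ∀ j ∈ Finset.range (n + 1),
          grpOp (F := F) (cs.simple (letterP n))
              * (mulOp (cfN (yv x n) n (j + 1)) * Tword cs a (sigmaWord (-(j : ℤ) - 1)))
            = mulOp ((if (j + 1) % 2 ≠ n % 2 then 1 else z) * cfN z n (j + 1))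
                  * Tword cs a (sigmaWord (-(j : ℤ) - 1))
                + (if (j + 1) % 2 ≠ n % 2 then
                    mulOp ((1 - z) * cfN z n (j + 1))
                      * Tword cs a (sigmaWord (-(j : ℤ) - 2)) else 0) := by
        intro j _
        rw [← mul_assoc, grpOp_mulOp, smul_cfN, hz, mul_assoc,
          grpOp_simple_eq cs x a hx1 ha0 ha1 (letterP n), add_mul, one_mul,
          mul_assoc (mulOp (1 - a (letterP n))), TwN cs x a hx0 hx1 hact ha0 ha1 n j,
          hb_eq x a ha0 ha1 n, ← hzdef, mul_add]
        by_cases hpar : (j + 1) % 2 = n % 2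
        · rw [if_pos hpar, if_neg (by omega : ¬ (j + 1) % 2 ≠ n % 2),
            if_neg (by omega : ¬ (j + 1) % 2 ≠ n % 2), add_zero,
            mul_neg, mul_neg, ← mul_assoc, ← mulOp_mul]
          have hzc : z * cfN z n (j + 1) = cfN z n (j + 1) - cfN z n (j + 1) * (1 - z) := by
            ring
          rw [hzc, mulOp_sub, sub_mul]
          abel
        · rw [if_neg hpar, if_pos hpar, if_pos hpar, one_mul,
            ← mul_assoc, ← mulOp_mul, mul_comm (cfN z n (j + 1)) (1 - z)]
          exact add_comm _ _
      rw [Finset.sum_congr rfl hterm_pos, Finset.sum_congr rfl hterm_neg,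
        Finset.sum_add_distrib, Finset.sum_add_distrib, Finset.sum_add_distrib]
      -- collapse the k = 0 exceptional column
      have hCsum : (∑ k ∈ Finset.range (n + 1), if ¬ n % 2 = 0 ∧ k = 0 then
            mulOp ((1 - z) * 1) * Tword cs a (sigmaWord (-1 : ℤ)) else 0)
          = (if ¬ n % 2 = 0 then
              mulOp ((1 - z) * 1) * Tword cs a (sigmaWord (-1 : ℤ)) else 0) := by
        by_cases hn : n % 2 = 0
        · simp [hn]
        · simp only [hn, not_false_iff, true_and, if_pos]
          rw [Finset.sum_ite_eq' (Finset.range (n + 1)) 0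
            (fun _ => mulOp ((1 - z) * 1) * Tword cs a (sigmaWord (-1 : ℤ)))]
          simp
      rw [hCsum]
      -- now transform the target (right-hand side)
      have hTP : (∑ k ∈ Finset.range (n + 1 + 1),
            mulOp (cfP z (n + 1) k) * Tword cs a (sigmaWord (k : ℤ)))
          = (∑ k ∈ Finset.range (n + 1),
              mulOp ((if k % 2 = n % 2 ∨ k = 0 then 1 else z) * cfP z n k)
                * Tword cs a (sigmaWord (k : ℤ)))
            + ∑ k ∈ Finset.range (n + 1), (if k % 2 = n % 2 then
                mulOp ((1 - z) * cfP z n k) * Tword cs a (sigmaWord ((k : ℤ) + 1)) else 0) := by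
        have hsplit : ∀ k ∈ Finset.range (n + 1 + 1),
            mulOp (cfP z (n + 1) k) * Tword cs a (sigmaWord (k : ℤ))
              = mulOp ((if k % 2 = n % 2 ∨ k = 0 then 1 else z) * cfP z n k)
                  * Tword cs a (sigmaWord (k : ℤ))
                + (if k % 2 ≠ n % 2 ∧ 1 ≤ k then
                    mulOp ((1 - z) * cfP z n (k - 1)) * Tword cs a (sigmaWord (k : ℤ)) else 0) := by
          intro k _
          rw [cfP_rec, mulOp_add, add_mul, mulOp_ite_mul]
        rw [Finset.sum_congr rfl hsplit, Finset.sum_add_distrib]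
        congr 1
        · rw [Finset.sum_range_succ]
          have h0 : cfP z n (n + 1) = 0 := by rw [cfP, if_neg (by omega)]
          rw [h0, mul_zero, mulOp_zero, zero_mul, add_zero]
        · rw [Finset.sum_range_succ']
          have hB0 : (if 0 % 2 ≠ n % 2 ∧ 1 ≤ 0 then
              mulOp ((1 - z) * cfP z n (0 - 1)) * Tword cs a (sigmaWord ((0 : ℕ) : ℤ)) else 0)
              = 0 := by
            rw [if_neg (by omega)]
          rw [hB0, add_zero]
          refine Finset.sum_congr rfl fun k _ => ?_
          by_cases h : k % 2 = n % 2
          · rw [if_pos (by omega : (k + 1) % 2 ≠ n % 2 ∧ 1 ≤ k + 1), if_pos h]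
            have h1 : k + 1 - 1 = k := by omega
            have h2 : ((k + 1 : ℕ) : ℤ) = (k : ℤ) + 1 := by push_cast; ring
            rw [h1, h2]
          · rw [if_neg (by omega : ¬ ((k + 1) % 2 ≠ n % 2 ∧ 1 ≤ k + 1)), if_neg h]
      have hTN : (∑ j ∈ Finset.range (n + 1 + 1),
            mulOp (cfN z (n + 1) (j + 1)) * Tword cs a (sigmaWord (-(j : ℤ) - 1)))
          = (∑ j ∈ Finset.range (n + 1),
              mulOp ((if (j + 1) % 2 ≠ n % 2 then 1 else z) * cfN z n (j + 1))
                * Tword cs a (sigmaWord (-(j : ℤ) - 1)))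
            + ((if ¬ n % 2 = 0 then
                  mulOp ((1 - z) * 1) * Tword cs a (sigmaWord (-1 : ℤ)) else 0)
              + ∑ j ∈ Finset.range (n + 1), (if (j + 1) % 2 ≠ n % 2 then
                  mulOp ((1 - z) * cfN z n (j + 1))
                    * Tword cs a (sigmaWord (-(j : ℤ) - 2)) else 0)) := by
        have hsplit : ∀ j ∈ Finset.range (n + 1 + 1),
            mulOp (cfN z (n + 1) (j + 1)) * Tword cs a (sigmaWord (-(j : ℤ) - 1))
              = mulOp ((if (j + 1) % 2 ≠ n % 2 then 1 else z) * cfN z n (j + 1))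
                  * Tword cs a (sigmaWord (-(j : ℤ) - 1))
                + (if (j + 1) % 2 = n % 2 then
                    mulOp ((1 - z) * (if j = 0 then 1 else cfN z n j))
                      * Tword cs a (sigmaWord (-(j : ℤ) - 1)) else 0) := by
          intro j _
          rw [cfN_rec, mulOp_add, add_mul, mulOp_ite_mul]
        rw [Finset.sum_congr rfl hsplit, Finset.sum_add_distrib]
        congr 1
        · rw [Finset.sum_range_succ]
          have h0 : cfN z n (n + 1 + 1) = 0 := by rw [cfN, if_neg (by omega)]
          rw [h0, mul_zero, mulOp_zero, zero_mul, add_zero]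
        · rw [Finset.sum_range_succ']
          have hE0 : (if (0 + 1) % 2 = n % 2 then
              mulOp ((1 - z) * (if 0 = 0 then 1 else cfN z n 0))
                * Tword cs a (sigmaWord (-((0 : ℕ) : ℤ) - 1)) else 0)
              = (if ¬ n % 2 = 0 then
                  mulOp ((1 - z) * 1) * Tword cs a (sigmaWord (-1 : ℤ)) else 0) := by
            rw [if_pos rfl, show (-((0 : ℕ) : ℤ) - 1) = (-1 : ℤ) by norm_num]
            by_cases hn : n % 2 = 0
            · rw [if_neg (by omega), if_neg (by omega)]
            · rw [if_pos (by omega), if_pos (by omega)]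
          rw [hE0]
          rw [add_comm]
          congr 1
          refine Finset.sum_congr rfl fun j _ => ?_
          by_cases h : (j + 1) % 2 = n % 2
          · rw [if_neg (by omega : ¬ (j + 1 + 1) % 2 = n % 2), if_neg (by omega : ¬ (j + 1) % 2 ≠ n % 2)]
          · rw [if_pos (by omega : (j + 1 + 1) % 2 = n % 2), if_pos (by omega : (j + 1) % 2 ≠ n % 2),
              if_neg (by omega : ¬ j + 1 = 0),
              show (-((j + 1 : ℕ) : ℤ) - 1) = -(j : ℤ) - 2 by push_cast; ring]
      rw [hTP, hTN]
      abel
end Key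

theorem sl2_grassmannian_localization
    {W F : Type*} [Field F] [Group W] [MulSemiringAction W F]
    {M : CoxeterMatrix (Fin 2)} (cs : CoxeterSystem M W)
    (hM01 : M 0 1 = 0)                 -- `m_{01} = ∞`: affine Weyl group of sl₂
    (x : F) (hx0 : x ≠ 0) (hx1 : x ≠ 1)
    (hact : ∀ i : Fin 2, cs.simple i • x = x⁻¹)  -- level-zero action of r_0, r_1
    (a : Fin 2 → F) (ha0 : a 0 = x⁻¹) (ha1 : a 1 = x)  -- e^{α_0}, e^{α_1} at δ = 0
    (Tw : W → Module.End ℤ F)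
    (hTw : ∀ ω : List (Fin 2), cs.IsReduced ω → Tw (cs.wordProd ω) = Tword cs a ω)
    (Pair : Module.End ℤ F → (W → F) → F)
    (hPadd : ∀ x y φ, Pair (x + y) φ = Pair x φ + Pair y φ)
    (hPmul : ∀ (q : F) y φ, Pair (mulOp q * y) φ = q * Pair y φ)
    (hPgrp : ∀ (w : W) (φ : W → F), Pair (grpOp w) φ = φ w)
    (ψ : ℤ → W → F)        -- ψ m = ψ^{σ_m}
    (hψ : ∀ m j : ℤ, Pair (Tw (cs.wordProd (sigmaWord j))) (ψ m)
      = if cs.wordProd (sigmaWord m) = cs.wordProd (sigmaWord j) then 1 else 0) :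
    ∀ i a' m : ℕ, (m = 2 * i ∨ m + 1 = 2 * i) →
      ψ (m : ℤ) (cs.wordProd (sigmaWord (2 * (i : ℤ) + 2 * (a' : ℤ))))
        = (1 - x) ^ m * Sle x m a' := by
  intro i a' m hm
  set n := 2 * i + 2 * a' with hn
  have hneven : n % 2 = 0 := by omega
  have hmn : m ≤ n := by omega
  have hcast : (2 * (i : ℤ) + 2 * (a' : ℤ)) = ((n : ℕ) : ℤ) := by
    rw [hn]; push_cast; ring
  rw [hcast]
  -- pairing facts
  have hP0 : ∀ φ, Pair 0 φ = 0 := by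
    intro φ
    have h := hPadd 0 0 φ
    rw [add_zero] at h
    exact left_eq_add.mp h
  have hPsum : ∀ (s : Finset ℕ) (f : ℕ → Module.End ℤ F) (φ : W → F),
      Pair (∑ k ∈ s, f k) φ = ∑ k ∈ s, Pair (f k) φ := by
    intro s f φ
    induction s using Finset.induction_on with
    | empty => simpa using hP0 φ
    | insert _ _ h ih => rw [Finset.sum_insert h, Finset.sum_insert h, hPadd, ih]
  have hval : ∀ (p k : ℤ) (c : F),
      Pair (mulOp c * Tword cs a (sigmaWord k)) (ψ p) = c * (if p = k then 1 else 0) := by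
    intro p k c
    rw [← hTw (sigmaWord k) (sigma_reduced cs hM01 k), hPmul, hψ p k]
    have hiff : (cs.wordProd (sigmaWord p) = cs.wordProd (sigmaWord k)) = (p = k) :=
      propext ⟨fun h => sigma_injective cs hM01 h, fun h => by rw [h]⟩
    rw [hiff]
    congr
  have hkey := key cs x a hx0 hx1 hact ha0 ha1 n
  have h1 : ψ (m : ℤ) (cs.wordProd (sigmaWord (n : ℤ)))
      = Pair (grpOp (cs.wordProd (sigmaWord (n : ℤ)))) (ψ (m : ℤ)) := (hPgrp _ _).symm
  rw [h1, hkey, hPadd, hPsum, hPsum]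
  have hpos : (∑ k ∈ Finset.range (n + 1),
        Pair (mulOp (cfP (yv x n) n k) * Tword cs a (sigmaWord (k : ℤ))) (ψ (m : ℤ)))
      = cfP (yv x n) n m := by
    have h2 : ∀ k ∈ Finset.range (n + 1),
        Pair (mulOp (cfP (yv x n) n k) * Tword cs a (sigmaWord (k : ℤ))) (ψ (m : ℤ))
          = cfP (yv x n) n k * (if (m : ℤ) = (k : ℤ) then 1 else 0) :=
      fun k _ => hval (m : ℤ) (k : ℤ) _
    refine (Finset.sum_congr rfl h2).trans ?_
    rw [Finset.sum_eq_single m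
      (fun b _ hb => by
        rw [if_neg (fun hc => hb (by exact_mod_cast hc.symm)), mul_zero])
      (fun hnm => absurd (Finset.mem_range.mpr (by omega)) hnm)]
    rw [if_pos rfl, mul_one]
  have hneg : (∑ j ∈ Finset.range (n + 1),
        Pair (mulOp (cfN (yv x n) n (j + 1)) * Tword cs a (sigmaWord (-(j : ℤ) - 1)))
          (ψ (m : ℤ)))
      = 0 := by
    refine Finset.sum_eq_zero fun j _ => ?_
    rw [hval (m : ℤ) (-(j : ℤ) - 1) _, if_neg (by omega), mul_zero]
  rw [hpos, hneg, add_zero]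
  have hyv : yv x n = x := by rw [yv, if_pos hneven]
  rw [hyv, cfP, if_pos hmn, show (n - m) / 2 = a' by omega]

end
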